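/- Let c, N, k be integers with c ≥ 1, N ≥ 3 and k ≥ 2, and let n_1, …, n_k be integers satisfying 1 ≤ n_j ≤ N − 1 for every j and n_1 + ⋯ + n_k = N + 1. For each j set w_j := c if n_j = 1, and w_j := n_j(4c − 1) − 5c + 2 if n_j ≥ 2. Then Σ_{j=1}^k w_j ≤ N(4c − 1) − 3(2c − 1). -/

import Mathlib

/-- Let `c, N, k` be integers with `c ≥ 1`, `N ≥ 3`, `k ≥ 2`, and let
`n_1, …, n_k` be integers with `1 ≤ n_j ≤ N - 1` for all `j` and
`n_1 + ⋯ + n_k = N + 1`.  With `w_j := c` if `n_j = 1` and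
`w_j := n_j (4c - 1) - 5c + 2` if `n_j ≥ 2`, one has
`Σ_j w_j ≤ N (4c - 1) - 3 (2c - 1)`. -/
theorem stmt6 (c N : ℤ) (k : ℕ) (hc : 1 ≤ c) (hN : 3 ≤ N) (hk : 2 ≤ k)
    (n : Fin k → ℤ) (hn1 : ∀ j, 1 ≤ n j) (hn2 : ∀ j, n j ≤ N - 1)
    (hsum : ∑ j, n j = N + 1)
    (w : Fin k → ℤ)
    (hw : ∀ j, w j = if n j = 1 then c else n j * (4 * c - 1) - 5 * c + 2) :
    ∑ j, w j ≤ N * (4 * c - 1) - 3 * (2 * c - 1) := by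
  classical
  set A : Finset (Fin k) := Finset.univ.filter (fun j => n j = 1) with hA
  set B : Finset (Fin k) := Finset.univ.filter (fun j => ¬ n j = 1) with hB
  have hcard : A.card + B.card = k := by
    rw [hA, hB, Finset.card_filter_add_card_filter_not]
    simp
  have hsumA : ∑ j ∈ A, n j = A.card := by
    rw [Finset.sum_congr rfl (fun j hj => (Finset.mem_filter.mp hj).2)]
    simp
    rfl
  have hsplitn : ∑ j ∈ A, n j + ∑ j ∈ B, n j = N + 1 := by
    rw [← hsum]
    exact Finset.sum_filter_add_sum_filter_not _ _ _
  have hsumB : ∑ j ∈ B, n j = N + 1 - A.card := by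
    rw [hsumA] at hsplitn; linarith
  have hB2 : ∀ j ∈ B, 2 ≤ n j := by
    intro j hj
    have := (Finset.mem_filter.mp hj).2
    have := hn1 j
    omega
  have hBlow : (2 : ℤ) * B.card ≤ ∑ j ∈ B, n j := by
    have := Finset.sum_le_sum hB2
    simpa [mul_comm] using this
  have hBhigh : ∑ j ∈ B, n j ≤ (B.card : ℤ) * (N - 1) := by
    have := Finset.sum_le_sum (fun j (_ : j ∈ B) => hn2 j)
    simpa [mul_sub] using this
  have hwA : ∑ j ∈ A, w j = (A.card : ℤ) * c := by
    rw [Finset.sum_congr rfl (fun j hj => by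
      rw [hw j, if_pos (Finset.mem_filter.mp hj).2])]
    simp [mul_comm]
  have hwB : ∑ j ∈ B, w j = (∑ j ∈ B, n j) * (4 * c - 1) + (B.card : ℤ) * (-(5 * c) + 2) := by
    rw [Finset.sum_congr rfl (fun j hj => by
      rw [hw j, if_neg (Finset.mem_filter.mp hj).2])]
    rw [show (fun j => n j * (4 * c - 1) - 5 * c + 2) = (fun j => n j * (4 * c - 1) + (-(5 * c) + 2)) from funext (fun j => by ring)]
    rw [Finset.sum_add_distrib, ← Finset.sum_mul, Finset.sum_const, nsmul_eq_mul]
  have hsplitw : ∑ j, w j = ∑ j ∈ A, w j + ∑ j ∈ B, w j :=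
    (Finset.sum_filter_add_sum_filter_not _ _ _).symm
  set r : ℤ := (A.card : ℤ) with hr
  set m : ℤ := (B.card : ℤ) with hm
  have hrm : r + m = k := by rw [hr, hm]; exact_mod_cast congrArg (Nat.cast : ℕ → ℤ) hcard
  have hk2 : (2 : ℤ) ≤ r + m := by rw [hrm]; exact_mod_cast hk
  have hr0 : 0 ≤ r := Int.natCast_nonneg _
  have hm0 : 0 ≤ m := Int.natCast_nonneg _
  have htot : ∑ j, w j = r * c + (N + 1 - r) * (4 * c - 1) + m * (-(5 * c) + 2) := by
    rw [hsplitw, hwA, hwB, hsumB]; ring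
  rw [htot]
  have hlow : 2 * m ≤ N + 1 - r := by rw [← hsumB]; exact hBlow
  have hhigh : N + 1 - r ≤ m * (N - 1) := by rw [← hsumB]; exact hBhigh
  have hmcases : m = 0 ∨ m = 1 ∨ 2 ≤ m := by omega
  rcases hmcases with h | h | h
  · -- m = 0 : all n_j = 1, so r = N + 1
    have hrN : r = N + 1 := by nlinarith
    rw [h, hrN]
    nlinarith [mul_nonneg (by linarith : (0:ℤ) ≤ 3 * c - 1) (by linarith : (0:ℤ) ≤ N - 3)]
  · -- m = 1 : single big term ≤ N - 1 forces r ≥ 2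
    have hr2 : 2 ≤ r := by rw [h] at hhigh; linarith
    rw [h]
    nlinarith [mul_nonneg (by linarith : (0:ℤ) ≤ r - 2) (by linarith : (0:ℤ) ≤ 3 * c - 1)]
  · have h1 : 0 ≤ r * (3 * c - 1) := mul_nonneg hr0 (by linarith)
    have h2 : 0 ≤ (m - 2) * (5 * c - 2) :=
      mul_nonneg (by linarith) (by linarith)
    have key : r * c + (N + 1 - r) * (4 * c - 1) + m * (-(5 * c) + 2)
        = N * (4 * c - 1) - 3 * (2 * c - 1) - (r * (3 * c - 1) + (m - 2) * (5 * c - 2)) := by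
      ring
    rw [key]; linarith
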